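/- Let n > r ≥ 2. If G is a K_{r+1}-free graph of order n, then the algebraic connectivity satisfies μ_2(G) ≤ n − ⌈n/r⌉, and this bound is attained by the Turán graph T_r(n). -/

import Mathlib

open Matrix SimpleGraph Finset

/-- The Laplacian matrix `L(G) = D - A` of a finite simple graph `G`. -/
noncomputable def laplacian {V : Type} [Fintype V] [DecidableEq V]
    (G : SimpleGraph V) : Matrix V V ℝ :=
  letI := Classical.decRel G.Adj
  Matrix.diagonal (fun v => (G.degree v : ℝ)) - G.adjMatrix ℝ

theorem laplacian_isHermitian {V : Type} [Fintype V] [DecidableEq V]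
    (G : SimpleGraph V) : (laplacian G).IsHermitian := by
  letI := Classical.decRel G.Adj
  unfold laplacian
  refine Matrix.IsHermitian.sub (Matrix.isHermitian_diagonal _) ?_
  rw [Matrix.IsHermitian, conjTranspose_eq_transpose_of_trivial]
  exact G.isSymm_adjMatrix

/-- The multiset of Laplacian eigenvalues (with multiplicity) of `G`. -/
noncomputable def lapSpectrum {V : Type} [Fintype V] [DecidableEq V]
    (G : SimpleGraph V) : Multiset ℝ :=
  Finset.univ.val.map (laplacian_isHermitian G).eigenvalues

/-- The Laplacian eigenvalues of `G`, sorted in ascending order. -/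
noncomputable def lapEigsSorted {V : Type} [Fintype V] [DecidableEq V]
    (G : SimpleGraph V) : List ℝ :=
  Multiset.sort (Finset.univ.val.map (laplacian_isHermitian G).eigenvalues) (· ≤ ·)

/-- The algebraic connectivity `μ₂(G)`: the second smallest Laplacian eigenvalue. -/
noncomputable def mu2 {V : Type} [Fintype V] [DecidableEq V]
    (G : SimpleGraph V) : ℝ :=
  (lapEigsSorted G).getD 1 0

section Aux

section Spectral
variable {V : Type} [Fintype V] [DecidableEq V]


lemma dot_sum (z : V → ℝ) (f : V → (V → ℝ)) : z ⬝ᵥ (∑ i, f i) = ∑ i, z ⬝ᵥ f i := by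
  simp [dotProduct, Finset.sum_apply, Finset.mul_sum]
  exact Finset.sum_comm

lemma eigen_expand {A : Matrix V V ℝ} (hA : A.IsHermitian) (z : V → ℝ) :
    ∃ d : V → ℝ, (∀ i, d i = (WithLp.equiv 2 (V → ℝ)) (hA.eigenvectorBasis i) ⬝ᵥ z) ∧
      z ⬝ᵥ z = ∑ i, d i ^ 2 ∧ z ⬝ᵥ (A *ᵥ z) = ∑ i, hA.eigenvalues i * d i ^ 2 := by
  classical
  set b := hA.eigenvectorBasis with hb
  set u : V → (V → ℝ) := fun i => (WithLp.equiv 2 (V → ℝ)) (b i) with hu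
  set d : V → ℝ := fun i => u i ⬝ᵥ z with hd
  have hrepr : ∀ i, b.repr ((WithLp.equiv 2 (V → ℝ)).symm z) i = d i := by
    intro i
    rw [OrthonormalBasis.repr_apply_apply, PiLp.inner_apply]
    simp [hd, hu, dotProduct, RCLike.inner_apply]
    exact Finset.sum_congr rfl (fun _ _ => mul_comm _ _)
  have hz : z = ∑ i, d i • u i := by
    have h2 := congrArg (WithLp.equiv 2 (V → ℝ)) (b.sum_repr ((WithLp.equiv 2 (V → ℝ)).symm z))
    simp only [map_sum, Equiv.apply_symm_apply] at h2
    rw [← h2]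
    simp only [hrepr]
    funext v
    rw [WithLp.equiv_apply, WithLp.ofLp_sum, Finset.sum_apply, Finset.sum_apply]
    rfl
  have key : ∀ c : V → ℝ, z ⬝ᵥ (∑ i, c i • u i) = ∑ i, c i * d i := by
    intro c
    rw [dot_sum]
    congr 1; funext i
    rw [dotProduct_smul, smul_eq_mul, dotProduct_comm]
  refine ⟨d, fun i => rfl, ?_, ?_⟩
  · conv_lhs => rw [show z ⬝ᵥ z = z ⬝ᵥ (∑ i, d i • u i) from by rw [← hz]]
    rw [key]; congr 1; funext i; ring
  · have hAz : A *ᵥ z = ∑ i, (d i * hA.eigenvalues i) • u i := by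
      conv_lhs => rw [hz]
      rw [show A *ᵥ (∑ i, d i • u i) = ∑ i, A *ᵥ (d i • u i) from by
        rw [← Matrix.mulVecLin_apply, map_sum]; simp [Matrix.mulVecLin_apply, mulVec_smul]]
      congr 1; funext i
      rw [mulVec_smul, show A *ᵥ u i = hA.eigenvalues i • u i from hA.mulVec_eigenvectorBasis i, smul_smul, mul_comm]
    rw [hAz, key]
    congr 1; funext i; ring


lemma eigbasis_dot {A : Matrix V V ℝ} (hA : A.IsHermitian) (i j : V) :
    (WithLp.equiv 2 (V → ℝ)) (hA.eigenvectorBasis i) ⬝ᵥ (WithLp.equiv 2 (V → ℝ)) (hA.eigenvectorBasis j)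
      = if i = j then 1 else 0 := by
  have h := orthonormal_iff_ite.mp hA.eigenvectorBasis.orthonormal i j
  rw [PiLp.inner_apply] at h
  simpa [dotProduct, RCLike.inner_apply, mul_comm] using h

lemma one_dot_mulVec {A : Matrix V V ℝ} (hA : A.IsHermitian)
    (hone : A *ᵥ (fun _ => (1:ℝ)) = 0) (y : V → ℝ) :
    (fun _ => (1:ℝ)) ⬝ᵥ (A *ᵥ y) = 0 := by
  have htr : Aᵀ = A := by
    rw [← Matrix.conjTranspose_eq_transpose_of_trivial]; exact hA
  rw [Matrix.dotProduct_mulVec, ← Matrix.mulVec_transpose, htr, hone]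
  simp

lemma two_le_card_small {A : Matrix V V ℝ} (hA : A.IsHermitian) (c : ℝ) (hc : 0 ≤ c)
    (hone : A *ᵥ (fun _ => (1:ℝ)) = 0) (y : V → ℝ) (hy : 0 < y ⬝ᵥ y)
    (hsum : (fun _ => (1:ℝ)) ⬝ᵥ y = 0) (hQ : y ⬝ᵥ (A *ᵥ y) ≤ c * (y ⬝ᵥ y)) :
    2 ≤ (univ.filter (fun i => hA.eigenvalues i ≤ c)).card := by
  classical
  by_contra h
  push_neg at h
  have hcard : (univ.filter (fun i => hA.eigenvalues i ≤ c)).card ≤ 1 := by omega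
  have main : ∀ z : V → ℝ, 0 < z ⬝ᵥ z → z ⬝ᵥ (A *ᵥ z) ≤ c * (z ⬝ᵥ z) →
      ∃ i, hA.eigenvalues i ≤ c ∧ (WithLp.equiv 2 (V → ℝ)) (hA.eigenvectorBasis i) ⬝ᵥ z ≠ 0 := by
    intro z hz hQz
    by_contra hno
    push_neg at hno
    obtain ⟨d, hdef, hzz, hAz⟩ := eigen_expand hA z
    have hlt : c * (z ⬝ᵥ z) < z ⬝ᵥ (A *ᵥ z) := by
      rw [hzz, hAz, Finset.mul_sum]
      have hne : ∃ i ∈ (univ : Finset V), d i ≠ 0 := by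
        by_contra hall
        push_neg at hall
        rw [hzz] at hz
        have : ∑ i, d i ^ 2 = 0 :=
          Finset.sum_eq_zero (fun i _ => by rw [hall i (mem_univ i)]; ring)
        linarith
      obtain ⟨i0, _, hi0⟩ := hne
      have hgt : ∀ i, d i ≠ 0 → c < hA.eigenvalues i := by
        intro i hdi
        by_contra hle
        exact hdi (by rw [hdef]; exact hno i (le_of_not_gt hle))
      apply Finset.sum_lt_sum
      · intro i _
        by_cases hdi : d i = 0
        · simp [hdi]
        · nlinarith [hgt i hdi, sq_nonneg (d i)]
      · refine ⟨i0, mem_univ i0, ?_⟩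
        have h3 : 0 < d i0 ^ 2 := by rw [← sq_abs]; exact pow_pos (abs_pos.mpr hi0) 2
        nlinarith [mul_pos (sub_pos.mpr (hgt i0 hi0)) h3]
    linarith
  rcases (univ.filter (fun i => hA.eigenvalues i ≤ c)).eq_empty_or_nonempty with hemp | ⟨i0, hi0⟩
  · obtain ⟨i, hi, _⟩ := main y hy hQ
    have : i ∈ univ.filter (fun i => hA.eigenvalues i ≤ c) := by simp [hi]
    rw [hemp] at this; exact absurd this (notMem_empty i)
  · have huniq : ∀ i, hA.eigenvalues i ≤ c → i = i0 := by
      intro i hi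
      have h1 : i ∈ univ.filter (fun j => hA.eigenvalues j ≤ c) := by simp [hi]
      exact Finset.card_le_one.mp hcard i h1 i0 hi0
    set o : V → ℝ := fun _ => (1:ℝ) with ho
    set u0 : V → ℝ := (WithLp.equiv 2 (V → ℝ)) (hA.eigenvectorBasis i0) with hu0
    by_cases ha : u0 ⬝ᵥ y = 0
    · obtain ⟨i, hi, hne⟩ := main y hy hQ
      rw [huniq i hi] at hne
      exact hne ha
    · set a : ℝ := u0 ⬝ᵥ y with haa
      set b : ℝ := - (u0 ⬝ᵥ o) with hbb
      set z : V → ℝ := a • o + b • y with hz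
      have hcz : u0 ⬝ᵥ z = 0 := by
        rw [hz, dotProduct_add, dotProduct_smul, dotProduct_smul, smul_eq_mul, smul_eq_mul,
          ← haa, hbb]
        ring
      have hoy : o ⬝ᵥ y = 0 := hsum
      have hzz : z ⬝ᵥ z = a^2 * (o ⬝ᵥ o) + b^2 * (y ⬝ᵥ y) := by
        simp only [hz, dotProduct_add, add_dotProduct, dotProduct_smul, smul_dotProduct,
          smul_eq_mul]
        rw [hoy, dotProduct_comm y o, hoy]; ring
      have hoo : o ⬝ᵥ o = (Fintype.card V : ℝ) := by simp [dotProduct, ho]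
      have hon : 0 < o ⬝ᵥ o := by
        rw [hoo]
        have hne : Nonempty V := by
          by_contra hne
          rw [not_nonempty_iff] at hne
          simp [dotProduct] at hy
        have : 0 < Fintype.card V := Fintype.card_pos
        positivity
      have hzpos : 0 < z ⬝ᵥ z := by
        rw [hzz]
        have h2 : 0 < a^2 * (o ⬝ᵥ o) := by positivity
        nlinarith [mul_nonneg (sq_nonneg b) hy.le]
      have hQz : z ⬝ᵥ (A *ᵥ z) = b^2 * (y ⬝ᵥ (A *ᵥ y)) := by
        have hAz : A *ᵥ z = b • (A *ᵥ y) := by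
          rw [hz, mulVec_add, mulVec_smul, mulVec_smul, hone]
          simp
        rw [hAz, hz]
        simp only [add_dotProduct, smul_dotProduct, dotProduct_smul, smul_eq_mul]
        rw [one_dot_mulVec hA hone y]; ring
      have hQzle : z ⬝ᵥ (A *ᵥ z) ≤ c * (z ⬝ᵥ z) := by
        rw [hQz, hzz]
        have h1 : b^2 * (y ⬝ᵥ (A *ᵥ y)) ≤ b^2 * (c * (y ⬝ᵥ y)) :=
          mul_le_mul_of_nonneg_left hQ (sq_nonneg b)
        nlinarith [mul_nonneg hc (mul_nonneg (sq_nonneg a) hon.le)]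
      obtain ⟨i, hi, hne⟩ := main z hzpos hQzle
      rw [huniq i hi] at hne
      exact hne hcz

lemma card_lt_le_one {A : Matrix V V ℝ} (hA : A.IsHermitian) (c : ℝ)
    (hlow : ∀ z : V → ℝ, (fun _ => (1:ℝ)) ⬝ᵥ z = 0 → c * (z ⬝ᵥ z) ≤ z ⬝ᵥ (A *ᵥ z)) :
    (univ.filter (fun i => hA.eigenvalues i < c)).card ≤ 1 := by
  classical
  by_contra h
  push_neg at h
  obtain ⟨i, hi, j, hj, hij⟩ := Finset.one_lt_card.mp h
  rw [Finset.mem_filter] at hi hj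
  set ui : V → ℝ := (WithLp.equiv 2 (V → ℝ)) (hA.eigenvectorBasis i) with hui
  set uj : V → ℝ := (WithLp.equiv 2 (V → ℝ)) (hA.eigenvectorBasis j) with huj
  set o : V → ℝ := fun _ => (1:ℝ) with ho
  obtain ⟨a, b, hab, hsum⟩ : ∃ a b : ℝ, ¬(a = 0 ∧ b = 0) ∧ a * (o ⬝ᵥ ui) + b * (o ⬝ᵥ uj) = 0 := by
    by_cases h0 : o ⬝ᵥ ui = 0 ∧ o ⬝ᵥ uj = 0
    · exact ⟨1, 0, by simp, by rw [h0.1, h0.2]; ring⟩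
    · refine ⟨o ⬝ᵥ uj, -(o ⬝ᵥ ui), ?_, by ring⟩
      rintro ⟨h1, h2⟩
      exact h0 ⟨by linarith [neg_eq_zero.mp h2], h1⟩
  set z : V → ℝ := a • ui + b • uj with hz
  have hii : ui ⬝ᵥ ui = 1 := by rw [hui, eigbasis_dot hA i i]; simp
  have hjj : uj ⬝ᵥ uj = 1 := by rw [huj, eigbasis_dot hA j j]; simp
  have hij' : ui ⬝ᵥ uj = 0 := by rw [hui, huj, eigbasis_dot hA i j]; simp [hij]
  have hji' : uj ⬝ᵥ ui = 0 := by rw [dotProduct_comm]; exact hij'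
  have hoz : o ⬝ᵥ z = 0 := by
    simp only [hz, dotProduct_add, dotProduct_smul, smul_eq_mul]
    exact hsum
  have hzz : z ⬝ᵥ z = a^2 + b^2 := by
    simp only [hz, dotProduct_add, add_dotProduct, dotProduct_smul, smul_dotProduct, smul_eq_mul]
    rw [hii, hjj, hij', hji']; ring
  have hQz : z ⬝ᵥ (A *ᵥ z) = hA.eigenvalues i * a^2 + hA.eigenvalues j * b^2 := by
    have hAz : A *ᵥ z = (a * hA.eigenvalues i) • ui + (b * hA.eigenvalues j) • uj := by
      rw [hz, mulVec_add, mulVec_smul, mulVec_smul, hui, huj,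
        show A *ᵥ (WithLp.equiv 2 (V → ℝ)) (hA.eigenvectorBasis i) = hA.eigenvalues i • (WithLp.equiv 2 (V → ℝ)) (hA.eigenvectorBasis i) from hA.mulVec_eigenvectorBasis i,
        show A *ᵥ (WithLp.equiv 2 (V → ℝ)) (hA.eigenvectorBasis j) = hA.eigenvalues j • (WithLp.equiv 2 (V → ℝ)) (hA.eigenvectorBasis j) from hA.mulVec_eigenvectorBasis j]
      rw [smul_smul, smul_smul]
    rw [hAz, hz]
    simp only [add_dotProduct, dotProduct_add, smul_dotProduct, dotProduct_smul, smul_eq_mul]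
    rw [hii, hjj, hij', hji']; ring
  have hlow' := hlow z hoz
  rw [hzz, hQz] at hlow'
  rcases not_and_or.mp hab with h1 | h1
  · nlinarith [hi.2, hj.2, sq_nonneg b, mul_pos (sub_pos.mpr hi.2) (pow_pos (abs_pos.mpr h1) 2),
      sq_abs a, mul_nonneg (sub_nonneg.mpr hj.2.le) (sq_nonneg b)]
  · nlinarith [hi.2, hj.2, sq_nonneg a, mul_pos (sub_pos.mpr hj.2) (pow_pos (abs_pos.mpr h1) 2),
      sq_abs b, mul_nonneg (sub_nonneg.mpr hi.2.le) (sq_nonneg a)]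

end Spectral



section Sorted
variable {V : Type} [Fintype V] [DecidableEq V]

lemma sorted_getD_le (l : List ℝ) (hl : l.Pairwise (· ≤ ·)) (c : ℝ)
    (h2 : 2 ≤ l.countP (fun x => decide (x ≤ c))) : l.getD 1 0 ≤ c := by
  match l with
  | [] => rw [List.countP_nil] at h2; omega
  | [a] =>
    have := List.countP_le_length (p := fun x => decide (x ≤ c)) (l := [a])
    simp only [List.length_singleton] at this
    omega
  | a :: b :: t =>
    show b ≤ c
    by_contra hbc
    push_neg at hbc
    rw [List.pairwise_cons] at hl
    have hl2 := hl.2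
    rw [List.pairwise_cons] at hl2
    have hzero : (b :: t).countP (fun x => decide (x ≤ c)) = 0 := by
      rw [List.countP_eq_zero]
      intro x hx
      simp only [decide_eq_true_eq]
      push_neg
      rcases List.mem_cons.mp hx with rfl | hx'
      · exact hbc
      · exact lt_of_lt_of_le hbc (hl2.1 x hx')
    rw [List.countP_cons, hzero] at h2
    split_ifs at h2 <;> omega

lemma sorted_le_getD (l : List ℝ) (hl : l.Pairwise (· ≤ ·)) (c : ℝ) (hlen : 2 ≤ l.length)
    (h1 : l.countP (fun x => decide (x < c)) ≤ 1) : c ≤ l.getD 1 0 := by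
  match l with
  | [] => simp at hlen
  | [a] => simp at hlen
  | a :: b :: t =>
    show c ≤ b
    by_contra hbc
    push_neg at hbc
    rw [List.pairwise_cons] at hl
    have hab : a ≤ b := hl.1 b (by simp)
    rw [List.countP_cons, List.countP_cons] at h1
    simp only [decide_eq_true_eq] at h1
    rw [if_pos (lt_of_le_of_lt hab hbc), if_pos hbc] at h1
    omega

lemma countP_lapEigs (G : SimpleGraph V) (p : ℝ → Prop) [DecidablePred p] :
    (lapEigsSorted G).countP (fun x => decide (p x)) =
      (univ.filter (fun i => p ((laplacian_isHermitian G).eigenvalues i))).card := by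
  unfold lapEigsSorted
  rw [← Multiset.coe_countP]
  rw [Multiset.sort_eq]
  rw [Multiset.countP_map]
  rw [← Finset.filter_val, Finset.card_val]

lemma length_lapEigs (G : SimpleGraph V) : (lapEigsSorted G).length = Fintype.card V := by
  unfold lapEigsSorted
  rw [Multiset.length_sort, Multiset.card_map]
  rfl

lemma mu2_le_of_count (G : SimpleGraph V) (c : ℝ)
    (h2 : 2 ≤ (univ.filter (fun i => (laplacian_isHermitian G).eigenvalues i ≤ c)).card) :
    mu2 G ≤ c := by
  refine sorted_getD_le (lapEigsSorted G) (Multiset.pairwise_sort _ _) c ?_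
  rw [countP_lapEigs G (fun x => x ≤ c)]
  exact h2

lemma le_mu2_of_count (G : SimpleGraph V) (c : ℝ) (hV : 2 ≤ Fintype.card V)
    (h1 : (univ.filter (fun i => (laplacian_isHermitian G).eigenvalues i < c)).card ≤ 1) :
    c ≤ mu2 G := by
  refine sorted_le_getD (lapEigsSorted G) (Multiset.pairwise_sort _ _) c ?_ ?_
  · rw [length_lapEigs]; exact hV
  · rw [countP_lapEigs G (fun x => x < c)]
    exact h1

section Lap
variable {V : Type} [Fintype V] [DecidableEq V]

open scoped Classical in
lemma lap_apply (G : SimpleGraph V) (v w : V) :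
    laplacian G v w = (if v = w then (G.degree v : ℝ) else 0) - (if G.Adj v w then 1 else 0) := by
  letI := Classical.decRel G.Adj
  unfold laplacian
  rw [Matrix.sub_apply, Matrix.diagonal_apply, SimpleGraph.adjMatrix_apply]

open scoped Classical in
lemma degree_eq_sum (G : SimpleGraph V) (v : V) :
    ((G.degree v : ℝ)) = ∑ w, (if G.Adj v w then (1:ℝ) else 0) := by
  letI := Classical.decRel G.Adj
  have h1 : G.degree v = (univ.filter (G.Adj v)).card := by
    rw [← SimpleGraph.neighborFinset_eq_filter]
    rfl
  rw [h1, Finset.card_filter]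
  push_cast
  rfl

open scoped Classical in
lemma lap_mulVec (G : SimpleGraph V) (x : V → ℝ) (v : V) :
    (laplacian G *ᵥ x) v = ∑ w, (if G.Adj v w then x v - x w else 0) := by
  rw [Matrix.mulVec, dotProduct]
  have : ∀ w, laplacian G v w * x w
      = (if v = w then (G.degree v : ℝ) else 0) * x w - (if G.Adj v w then 1 else 0) * x w := by
    intro w; rw [lap_apply]; ring
  rw [Finset.sum_congr rfl (fun w _ => this w), Finset.sum_sub_distrib]
  have h1 : ∑ w, (if v = w then (G.degree v : ℝ) else 0) * x w = (G.degree v : ℝ) * x v := by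
    rw [Finset.sum_eq_single v]
    · simp
    · intro w _ hw; rw [if_neg (fun h => hw h.symm)]; ring
    · intro h; exact absurd (mem_univ v) h
  rw [h1, degree_eq_sum, Finset.sum_mul]
  rw [← Finset.sum_sub_distrib]
  congr 1; funext w
  by_cases h : G.Adj v w <;> simp [h]
lemma lap_mulVec_one (G : SimpleGraph V) : laplacian G *ᵥ (fun _ => (1:ℝ)) = 0 := by
  funext v
  rw [lap_mulVec]
  simp

open scoped Classical in
lemma lap_quadform (G : SimpleGraph V) (x : V → ℝ) :
    x ⬝ᵥ (laplacian G *ᵥ x)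
      = (1/2) * ∑ v, ∑ w, (if G.Adj v w then (x v - x w)^2 else 0) := by
  have hE : x ⬝ᵥ (laplacian G *ᵥ x)
      = ∑ v, ∑ w, (if G.Adj v w then x v * (x v - x w) else 0) := by
    rw [dotProduct]
    congr 1; funext v
    rw [lap_mulVec, Finset.mul_sum]
    congr 1; funext w
    by_cases h : G.Adj v w <;> simp [h]
  have hswap : ∑ v, ∑ w, (if G.Adj v w then x v * (x v - x w) else 0)
      = ∑ v, ∑ w, (if G.Adj v w then x w * (x w - x v) else 0) := by
    rw [Finset.sum_comm]
    congr 1; funext v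
    congr 1; funext w
    by_cases h : G.Adj v w
    · rw [if_pos h, if_pos h.symm]
    · rw [if_neg h, if_neg (fun h' => h h'.symm)]
  have : 2 * (x ⬝ᵥ (laplacian G *ᵥ x)) = ∑ v, ∑ w, (if G.Adj v w then (x v - x w)^2 else 0) := by
    rw [two_mul, hE]
    nth_rewrite 2 [hswap]
    rw [← Finset.sum_add_distrib]
    congr 1; funext v
    rw [← Finset.sum_add_distrib]
    congr 1; funext w
    by_cases h : G.Adj v w <;> simp [h] <;> ring
  linarith

end Lap


lemma exists_low_degree (n r : ℕ) (hr : 2 ≤ r) (hn : r < n) (G : SimpleGraph (Fin n))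
    [DecidableRel G.Adj] (hG : G.CliqueFree (r + 1)) :
    ∃ v, G.degree v + (n + r - 1) / r ≤ n := by
  set C := (n + r - 1) / r with hC
  have hCr : C * r ≤ n + r - 1 := Nat.div_mul_le_self _ _
  have hC2 : 2 ≤ C := by
    rw [hC]
    exact (Nat.le_div_iff_mul_le (by omega)).mpr (by omega)
  have hrC : r * (C - 1) + r = C * r := by
    rw [Nat.mul_comm, Nat.sub_one_mul]
    have : r ≤ C * r := Nat.le_mul_of_pos_left r (by omega)
    omega
  have hrtn : r * (C - 1) ≤ n - 1 := by omega
  by_contra h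
  push_neg at h
  have hdegW : ∀ v, n ≤ G.degree v + (C - 1) := by
    intro v; have := h v; omega
  -- complement bound : # non-neighbors of v  ≤ C - 1
  have hnonnbr : ∀ v : Fin n, (univ.filter (fun u => ¬ G.Adj v u)).card ≤ C - 1 := by
    intro v
    have hsplit := Finset.card_filter_add_card_filter_not
      (s := (univ : Finset (Fin n))) (p := fun u => G.Adj v u)
    have hdegv : (univ.filter (fun u => G.Adj v u)).card = G.degree v := by
      rw [← SimpleGraph.neighborFinset_eq_filter]; rfl
    rw [Finset.card_univ, Fintype.card_fin] at hsplit
    have := hdegW v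
    omega
  have key : ∀ k, k ≤ r → ∃ s : Finset (Fin n), G.IsClique ↑s ∧ s.card = k ∧
      n ≤ (univ.filter (fun w => ∀ v ∈ s, G.Adj v w)).card + k * (C - 1) := by
    intro k
    induction k with
    | zero =>
      intro _
      refine ⟨∅, by simp, rfl, ?_⟩
      have heq : (univ.filter (fun w => ∀ v ∈ (∅ : Finset (Fin n)), G.Adj v w)) = univ := by
        apply Finset.filter_true_of_mem
        intro w _ v hv
        exact absurd hv (notMem_empty v)
      rw [heq]
      simp [Finset.card_univ]
    | succ k ih =>
      intro hk1
      obtain ⟨s, hclique, hcard, hW⟩ := ih (by omega)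
      set W := univ.filter (fun w => ∀ v ∈ s, G.Adj v w) with hWdef
      have hkt : k * (C - 1) ≤ r * (C - 1) := Nat.mul_le_mul_right _ (by omega)
      have hWpos : 0 < W.card := by omega
      obtain ⟨w, hw⟩ := Finset.card_pos.mp hWpos
      have hwadj : ∀ v ∈ s, G.Adj v w := (Finset.mem_filter.mp hw).2
      have hwns : w ∉ s := fun hws => G.irrefl (hwadj w hws)
      refine ⟨insert w s, ?_, ?_, ?_⟩
      · rw [Finset.coe_insert]
        exact hclique.insert (fun b hb _ => (hwadj b hb).symm)
      · rw [Finset.card_insert_of_notMem hwns, hcard]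
      · set W' := univ.filter (fun u => ∀ v ∈ insert w s, G.Adj v u) with hW'def
        have hsub : W ⊆ W' ∪ (univ.filter (fun u => ¬ G.Adj w u)) := by
          intro u hu
          rw [Finset.mem_union]
          by_cases hadj : G.Adj w u
          · left
            rw [hW'def, Finset.mem_filter]
            refine ⟨mem_univ u, ?_⟩
            intro v hv
            rcases Finset.mem_insert.mp hv with rfl | hv'
            · exact hadj
            · exact (Finset.mem_filter.mp hu).2 v hv'
          · right
            rw [Finset.mem_filter]
            exact ⟨mem_univ u, hadj⟩
        have hcardle : W.card ≤ W'.card + (C - 1) := by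
          calc W.card ≤ (W' ∪ (univ.filter (fun u => ¬ G.Adj w u))).card :=
                Finset.card_le_card hsub
            _ ≤ W'.card + (univ.filter (fun u => ¬ G.Adj w u)).card := Finset.card_union_le _ _
            _ ≤ W'.card + (C - 1) := by have := hnonnbr w; omega
        have hmul : (k + 1) * (C - 1) = k * (C - 1) + (C - 1) := by rw [Nat.succ_mul]
        omega
  obtain ⟨s, hclique, hcard, hW⟩ := key r le_rfl
  have hkt : r * (C - 1) ≤ r * (C - 1) := le_rfl
  have hWpos : 0 < (univ.filter (fun w => ∀ v ∈ s, G.Adj v w)).card := by omega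
  obtain ⟨w, hw⟩ := Finset.card_pos.mp hWpos
  have hwadj : ∀ v ∈ s, G.Adj v w := (Finset.mem_filter.mp hw).2
  have hwns : w ∉ s := fun hws => G.irrefl (hwadj w hws)
  refine hG (insert w s) ⟨?_, ?_⟩
  · rw [Finset.coe_insert]
    exact hclique.insert (fun b hb _ => (hwadj b hb).symm)
  · rw [Finset.card_insert_of_notMem hwns, hcard]

lemma ite_nonneg' (P : Prop) [Decidable P] (a : ℝ) (ha : 0 ≤ a) : (0:ℝ) ≤ if P then a else 0 := by
  split_ifs <;> simp [ha]

lemma sum_ite_const {V : Type} [Fintype V] (p : V → Prop) [DecidablePred p] (g : ℝ) :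
    ∑ u, (if p u then g else 0) = ((Finset.univ.filter p).card : ℝ) * g := by
  rw [Finset.sum_ite, Finset.sum_const, Finset.sum_const]
  simp [mul_comm]

open scoped Classical in
lemma mu2_upper (n : ℕ) (C : ℕ) (hC2 : 2 ≤ C) (hCn : C ≤ n) (G : SimpleGraph (Fin n))
    (v0 : Fin n) (hdeg : (letI := Classical.decRel G.Adj; G.degree v0) + C ≤ n) :
    mu2 G ≤ (n : ℝ) - C := by
  letI := Classical.decRel G.Adj
  set T : Finset (Fin n) := univ.filter (fun u => u ≠ v0 ∧ ¬ G.Adj v0 u) with hT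
  have hdegv : (univ.filter (fun u => G.Adj v0 u)).card = G.degree v0 := by
    rw [← SimpleGraph.neighborFinset_eq_filter]; rfl
  have hTcard : T.card + 1 + G.degree v0 = n := by
    have hsplit := Finset.card_filter_add_card_filter_not
      (s := (univ : Finset (Fin n))) (p := fun u => G.Adj v0 u)
    rw [Finset.card_univ, Fintype.card_fin, hdegv] at hsplit
    have hTerase : T = (univ.filter (fun u => ¬ G.Adj v0 u)).erase v0 := by
      ext u
      simp only [hT, Finset.mem_filter, Finset.mem_erase, mem_univ, true_and]
      try tauto
    have hv0mem : v0 ∈ univ.filter (fun u => ¬ G.Adj v0 u) := by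
      simp [G.irrefl]
    rw [hTerase, Finset.card_erase_of_mem hv0mem]
    have : 1 ≤ (univ.filter (fun u => ¬ G.Adj v0 u)).card := Finset.card_pos.mpr ⟨v0, hv0mem⟩
    omega
  have hm1 : 1 ≤ T.card := by omega
  set m : ℝ := (T.card : ℝ) with hm
  have hm1' : (1:ℝ) ≤ m := by rw [hm]; exact_mod_cast hm1
  set deg : ℝ := (G.degree v0 : ℝ) with hdegR
  set y : Fin n → ℝ := fun u => if u = v0 then m else if G.Adj v0 u then 0 else -1 with hy
  have hysum : (fun _ => (1:ℝ)) ⬝ᵥ y = 0 := by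
    have hsplity : ∀ u, y u = (if u = v0 then m else 0)
        + (if u ≠ v0 ∧ ¬ G.Adj v0 u then (-1:ℝ) else 0) := by
      intro u
      by_cases h1 : u = v0
      · subst h1; simp [hy, G.irrefl]
      · by_cases h2 : G.Adj v0 u <;> simp [hy, h1, h2]
    rw [dotProduct]
    simp only [one_mul]
    rw [Finset.sum_congr rfl (fun u _ => hsplity u), Finset.sum_add_distrib]
    rw [Finset.sum_ite_eq' univ v0 (fun _ => m)]
    rw [sum_ite_const (fun u => u ≠ v0 ∧ ¬ G.Adj v0 u) (-1)]
    rw [if_pos (mem_univ v0), ← hT, ← hm]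
    ring
  have hyy : y ⬝ᵥ y = m^2 + m := by
    have hsq : ∀ u, y u * y u = (if u = v0 then m^2 else 0)
        + (if u ≠ v0 ∧ ¬ G.Adj v0 u then (1:ℝ) else 0) := by
      intro u
      by_cases h1 : u = v0
      · subst h1; simp [hy, G.irrefl]; ring
      · by_cases h2 : G.Adj v0 u <;> simp [hy, h1, h2]
    rw [dotProduct, Finset.sum_congr rfl (fun u _ => hsq u), Finset.sum_add_distrib]
    rw [Finset.sum_ite_eq' univ v0 (fun _ => m^2)]
    rw [sum_ite_const (fun u => u ≠ v0 ∧ ¬ G.Adj v0 u) 1]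
    rw [if_pos (mem_univ v0), ← hT, ← hm]
    ring
  have hyypos : 0 < y ⬝ᵥ y := by rw [hyy]; nlinarith
  have hdegsum : ∑ w, (if G.Adj v0 w then (1:ℝ) else 0) = deg := by
    rw [sum_ite_const (fun u => G.Adj v0 u) 1, hdegv]
    simp [hdegR]
  have hQ : y ⬝ᵥ (laplacian G *ᵥ y) ≤ deg * (m^2 + m) := by
    rw [lap_quadform]
    set B : Fin n → Fin n → ℝ := fun v w =>
        (if v = v0 then (if G.Adj v0 w then m^2 else 0) else 0)
      + (if w = v0 then (if G.Adj v0 v then m^2 else 0) else 0)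
      + (if v ≠ v0 ∧ ¬ G.Adj v0 v then (if G.Adj v0 w then (1:ℝ) else 0) else 0)
      + (if w ≠ v0 ∧ ¬ G.Adj v0 w then (if G.Adj v0 v then (1:ℝ) else 0) else 0) with hB
    have hm2 : (0:ℝ) ≤ m^2 := sq_nonneg m
    have hBnn : ∀ v w, (0:ℝ) ≤ B v w := by
      intro v w
      refine add_nonneg (add_nonneg (add_nonneg ?_ ?_) ?_) ?_ <;>
        exact ite_nonneg' _ _ (ite_nonneg' _ _ (by positivity))
    have hpt : ∀ v w, (if G.Adj v w then (y v - y w)^2 else 0) ≤ B v w := by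
      intro v w
      by_cases hadj : G.Adj v w
      · rw [if_pos hadj]
        by_cases hv : v = v0
        · have haw : G.Adj v0 w := hv ▸ hadj
          have hw : w ≠ v0 := fun h => G.irrefl (h ▸ haw)
          have h0 : (y v - y w)^2 = m^2 := by
            rw [hy]; dsimp only; rw [if_pos hv, if_neg hw, if_pos haw]; ring
          have h1 : (if v = v0 then (if G.Adj v0 w then m^2 else 0) else 0) = m^2 := by
            rw [if_pos hv, if_pos haw]
          rw [h0, hB]; dsimp only
          rw [h1]
          have h2 := ite_nonneg' (w = v0) (if G.Adj v0 v then m^2 else 0)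
            (ite_nonneg' _ _ hm2)
          have h3 := ite_nonneg' (v ≠ v0 ∧ ¬ G.Adj v0 v) (if G.Adj v0 w then (1:ℝ) else 0)
            (ite_nonneg' _ _ zero_le_one)
          have h4 := ite_nonneg' (w ≠ v0 ∧ ¬ G.Adj v0 w) (if G.Adj v0 v then (1:ℝ) else 0)
            (ite_nonneg' _ _ zero_le_one)
          linarith
        · by_cases hw : w = v0
          · have hav : G.Adj v0 v := by rw [← hw]; exact hadj.symm
            have h0 : (y v - y w)^2 = m^2 := by
              rw [hy]; dsimp only; rw [if_neg hv, if_pos hav, if_pos hw]; ring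
            have h1 : (if w = v0 then (if G.Adj v0 v then m^2 else 0) else 0) = m^2 := by
              rw [if_pos hw, if_pos hav]
            rw [h0, hB]; dsimp only
            rw [h1]
            have h2 := ite_nonneg' (v = v0) (if G.Adj v0 w then m^2 else 0)
              (ite_nonneg' _ _ hm2)
            have h3 := ite_nonneg' (v ≠ v0 ∧ ¬ G.Adj v0 v) (if G.Adj v0 w then (1:ℝ) else 0)
              (ite_nonneg' _ _ zero_le_one)
            have h4 := ite_nonneg' (w ≠ v0 ∧ ¬ G.Adj v0 w) (if G.Adj v0 v then (1:ℝ) else 0)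
              (ite_nonneg' _ _ zero_le_one)
            linarith
          · by_cases hav : G.Adj v0 v <;> by_cases haw : G.Adj v0 w
            · have h0 : (y v - y w)^2 = 0 := by
                rw [hy]; dsimp only; rw [if_neg hv, if_neg hw, if_pos hav, if_pos haw]; ring
              rw [h0]; exact hBnn v w
            · have h0 : (y v - y w)^2 = 1 := by
                rw [hy]; dsimp only; rw [if_neg hv, if_neg hw, if_pos hav, if_neg haw]; ring
              have h5 : (if w ≠ v0 ∧ ¬ G.Adj v0 w then (if G.Adj v0 v then (1:ℝ) else 0) else 0)
                  = 1 := by rw [if_pos ⟨hw, haw⟩, if_pos hav]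
              rw [h0, hB]; dsimp only
              rw [h5]
              have h2 := ite_nonneg' (v = v0) (if G.Adj v0 w then m^2 else 0)
                (ite_nonneg' _ _ hm2)
              have h3 := ite_nonneg' (w = v0) (if G.Adj v0 v then m^2 else 0)
                (ite_nonneg' _ _ hm2)
              have h4 := ite_nonneg' (v ≠ v0 ∧ ¬ G.Adj v0 v) (if G.Adj v0 w then (1:ℝ) else 0)
                (ite_nonneg' _ _ zero_le_one)
              linarith
            · have h0 : (y v - y w)^2 = 1 := by
                rw [hy]; dsimp only; rw [if_neg hv, if_neg hw, if_neg hav, if_pos haw]; ring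
              have h5 : (if v ≠ v0 ∧ ¬ G.Adj v0 v then (if G.Adj v0 w then (1:ℝ) else 0) else 0)
                  = 1 := by rw [if_pos ⟨hv, hav⟩, if_pos haw]
              rw [h0, hB]; dsimp only
              rw [h5]
              have h2 := ite_nonneg' (v = v0) (if G.Adj v0 w then m^2 else 0)
                (ite_nonneg' _ _ hm2)
              have h3 := ite_nonneg' (w = v0) (if G.Adj v0 v then m^2 else 0)
                (ite_nonneg' _ _ hm2)
              have h4 := ite_nonneg' (w ≠ v0 ∧ ¬ G.Adj v0 w) (if G.Adj v0 v then (1:ℝ) else 0)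
                (ite_nonneg' _ _ zero_le_one)
              linarith
            · have h0 : (y v - y w)^2 = 0 := by
                rw [hy]; dsimp only; rw [if_neg hv, if_neg hw, if_neg hav, if_neg haw]; ring
              rw [h0]; exact hBnn v w
      · rw [if_neg hadj]; exact hBnn v w
    have hsumB : ∑ v, ∑ w, B v w = 2 * deg * m^2 + 2 * m * deg := by
      have hrow : ∀ v : Fin n, ∑ w, B v w
          = (if v = v0 then deg * m^2 else 0)
          + (if G.Adj v0 v then m^2 else 0)
          + (if v ≠ v0 ∧ ¬ G.Adj v0 v then deg else 0)
          + m * (if G.Adj v0 v then (1:ℝ) else 0) := by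
        intro v
        rw [hB]
        dsimp only
        rw [Finset.sum_add_distrib, Finset.sum_add_distrib, Finset.sum_add_distrib]
        congr 1; congr 1; congr 1
        · by_cases hv : v = v0
          · simp only [hv, if_pos rfl]
            rw [Finset.sum_congr rfl (fun w _ => rfl)]
            have : ∑ w, (if G.Adj v0 w then m^2 else 0) = deg * m^2 := by
              rw [sum_ite_const (fun w => G.Adj v0 w) (m^2), hdegv]
            exact this
          · simp only [hv, if_false]
            simp
        · rw [Finset.sum_ite_eq' univ v0 (fun _ => (if G.Adj v0 v then m^2 else 0))]
          rw [if_pos (mem_univ v0)]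
        · by_cases hv : v ≠ v0 ∧ ¬ G.Adj v0 v
          · simp only [if_pos hv]
            exact hdegsum
          · simp only [if_neg hv]
            simp
        · rw [sum_ite_const (fun w => w ≠ v0 ∧ ¬ G.Adj v0 w) (if G.Adj v0 v then (1:ℝ) else 0)]
      rw [Finset.sum_congr rfl (fun v _ => hrow v)]
      rw [Finset.sum_add_distrib, Finset.sum_add_distrib, Finset.sum_add_distrib]
      rw [Finset.sum_ite_eq' univ v0 (fun _ => deg * m^2), if_pos (mem_univ v0)]
      rw [sum_ite_const (fun v => G.Adj v0 v) (m^2), hdegv]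
      rw [sum_ite_const (fun v => v ≠ v0 ∧ ¬ G.Adj v0 v) deg, ← hT, ← hm]
      rw [← Finset.mul_sum, hdegsum]
      rw [← hdegR]
      ring
    have hle : ∑ v, ∑ w, (if G.Adj v w then (y v - y w)^2 else 0) ≤ 2 * deg * m^2 + 2 * m * deg := by
      rw [← hsumB]
      apply Finset.sum_le_sum
      intro v _
      exact Finset.sum_le_sum (fun w _ => hpt v w)
    linarith
  have hCle : deg ≤ (n:ℝ) - C := by
    rw [hdegR]
    have : (G.degree v0 : ℝ) + (C:ℝ) ≤ (n:ℝ) := by exact_mod_cast hdeg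
    linarith
  have hc0 : (0:ℝ) ≤ (n:ℝ) - C := by
    have : (C:ℝ) ≤ (n:ℝ) := by exact_mod_cast hCn
    linarith
  apply mu2_le_of_count
  apply two_le_card_small (laplacian_isHermitian G) ((n:ℝ) - C) hc0 (lap_mulVec_one G) y hyypos hysum
  calc y ⬝ᵥ (laplacian G *ᵥ y) ≤ deg * (m^2 + m) := hQ
    _ ≤ ((n:ℝ) - C) * (m^2 + m) := by nlinarith
    _ = ((n:ℝ) - C) * (y ⬝ᵥ y) := by rw [hyy]

lemma pair_sum {V : Type} [Fintype V] (s : Finset V) (z : V → ℝ) :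
    ∑ v ∈ s, ∑ w ∈ s, (z v - z w)^2
      = 2 * s.card * (∑ v ∈ s, (z v)^2) - 2 * (∑ v ∈ s, z v)^2 := by
  have hrow : ∀ v ∈ s, ∑ w ∈ s, (z v - z w)^2
      = s.card * z v^2 - 2 * z v * (∑ w ∈ s, z w) + ∑ w ∈ s, z w^2 := by
    intro v _
    have h0 : ∀ w ∈ s, (z v - z w)^2 = z v^2 - 2 * z v * z w + z w^2 := by
      intro w _; ring
    rw [Finset.sum_congr rfl h0, Finset.sum_add_distrib, Finset.sum_sub_distrib]
    rw [Finset.sum_const, ← Finset.mul_sum]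
    simp [nsmul_eq_mul]
  have h1 : ∑ v ∈ s, (s.card : ℝ) * z v ^2 = s.card * ∑ v ∈ s, z v^2 := by
    rw [Finset.mul_sum]
  have h2 : ∑ v ∈ s, 2 * z v * (∑ w ∈ s, z w) = 2 * (∑ v ∈ s, z v)^2 := by
    rw [← Finset.sum_mul]
    have h3 : ∑ v ∈ s, 2 * z v = 2 * ∑ v ∈ s, z v := by rw [Finset.mul_sum]
    rw [h3]; ring
  rw [Finset.sum_congr rfl hrow, Finset.sum_add_distrib, Finset.sum_sub_distrib, h1, h2,
    Finset.sum_const, nsmul_eq_mul]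
  ring

lemma turan_fiber_card (n r : ℕ) (hr : 0 < r) (k : ℕ) :
    (univ.filter (fun v : Fin n => (v:ℕ) % r = k)).card ≤ (n + r - 1) / r := by
  set C := (n + r - 1) / r with hC
  have hmain := Finset.card_le_card_of_injOn
    (s := univ.filter (fun v : Fin n => (v:ℕ) % r = k)) (t := Finset.range C)
    (fun v => (v:ℕ) / r) ?_ ?_
  · simpa using hmain
  · intro v hv
    show (v:ℕ) / r ∈ Finset.range C
    rw [Finset.mem_range]
    have hvn : (v:ℕ) < n := v.isLt
    have h1 : (v:ℕ) / r ≤ (n-1) / r := Nat.div_le_div_right (by omega)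
    have h2 : (n - 1) / r < C := by
      rw [hC]
      have : n + r - 1 = (n-1) + r := by omega
      rw [this, Nat.add_div_right _ hr]
      omega
    omega
  · intro a ha b hb hab
    simp only [Finset.mem_coe, Finset.mem_filter] at ha hb
    have hab' : (a:ℕ) / r = (b:ℕ) / r := hab
    have : (a:ℕ) = (b:ℕ) := by
      rw [← Nat.div_add_mod (a:ℕ) r, ← Nat.div_add_mod (b:ℕ) r, hab', ha.2, hb.2]
    exact Fin.ext this

lemma ite_irrel {p : Prop} (h1 h2 : Decidable p) (a b : ℝ) :
    (@ite _ p h1 a b) = (@ite _ p h2 a b) := by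
  congr 1

open scoped Classical in
lemma turan_quad_lower (n r : ℕ) (hr : 2 ≤ r) (hn : r < n) (z : Fin n → ℝ)
    (hz0 : (fun _ => (1:ℝ)) ⬝ᵥ z = 0) :
    ((n:ℝ) - (((n + r - 1) / r : ℕ) : ℝ)) * (z ⬝ᵥ z)
      ≤ z ⬝ᵥ (laplacian (turanGraph n r) *ᵥ z) := by
  set C : ℕ := (n + r - 1) / r with hC
  have hr0 : 0 < r := by omega
  have hs0 : ∑ v, z v = 0 := by simpa [dotProduct] using hz0
  set q : ℝ := ∑ v, z v^2 with hq
  have hzz : z ⬝ᵥ z = q := by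
    rw [dotProduct, hq]
    exact Finset.sum_congr rfl (fun v _ => by ring)
  rw [lap_quadform, hzz]
  have hsplit : ∀ v w : Fin n, (if (turanGraph n r).Adj v w then (z v - z w)^2 else 0)
      = (z v - z w)^2 - (if (v:ℕ) % r = (w:ℕ) % r then (z v - z w)^2 else 0) := by
    intro v w
    by_cases h : (v:ℕ) % r = (w:ℕ) % r
    · rw [if_pos h, if_neg (show ¬ (turanGraph n r).Adj v w from fun ha => ha h)]
      ring
    · rw [if_pos (show (turanGraph n r).Adj v w from h), if_neg h]
      ring
  have h2nq : ∑ v, ∑ w, (z v - z w)^2 = 2 * n * q := by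
    have hp := pair_sum (univ : Finset (Fin n)) z
    rw [hs0] at hp
    rw [hp, Finset.card_univ, Fintype.card_fin, ← hq]
    ring
  -- fiber decomposition for same-residue pairs
  set P : ℕ → Finset (Fin n) := fun k => univ.filter (fun v : Fin n => (v:ℕ) % r = k) with hP
  have hmaps : ∀ v : Fin n, v ∈ (univ : Finset (Fin n)) → (v:ℕ) % r ∈ Finset.range r :=
    fun v _ => Finset.mem_range.mpr (Nat.mod_lt _ hr0)
  have hstepA : ∀ v : Fin n, ∑ w : Fin n, (if (v:ℕ) % r = (w:ℕ) % r then (z v - z w)^2 else 0)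
      = ∑ w ∈ P ((v:ℕ) % r), (z v - z w)^2 := by
    intro v
    rw [Finset.sum_filter]
    refine Finset.sum_congr rfl (fun w _ => ?_)
    by_cases h : (v:ℕ) % r = (w:ℕ) % r
    · rw [if_pos h, if_pos h.symm]
    · rw [if_neg h, if_neg (fun hh => h hh.symm)]
  have hstepB : ∀ (f : Fin n → ℝ), ∑ k ∈ Finset.range r, ∑ v ∈ P k, f v = ∑ v, f v :=
    fun f => Finset.sum_fiberwise_of_maps_to hmaps f
  have hqk : ∑ k ∈ Finset.range r, ∑ v ∈ P k, z v ^ 2 = q := hstepB _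
  have heq_le : ∑ v : Fin n, ∑ w : Fin n, (if (v:ℕ) % r = (w:ℕ) % r then (z v - z w)^2 else 0)
      ≤ 2 * C * q := by
    rw [Finset.sum_congr rfl (fun v _ => hstepA v)]
    rw [← hstepB (fun v => ∑ w ∈ P ((v:ℕ) % r), (z v - z w)^2)]
    have hfiber : ∀ k ∈ Finset.range r,
        ∑ v ∈ P k, ∑ w ∈ P ((v:ℕ) % r), (z v - z w)^2
          ≤ 2 * C * ∑ v ∈ P k, z v ^ 2 := by
      intro k _
      have hcong : ∀ v ∈ P k, ∑ w ∈ P ((v:ℕ) % r), (z v - z w)^2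
          = ∑ w ∈ P k, (z v - z w)^2 := by
        intro v hv
        rw [(Finset.mem_filter.mp hv).2]
      rw [Finset.sum_congr rfl hcong, pair_sum (P k) z]
      have hcard : ((P k).card : ℝ) ≤ (C : ℝ) := by
        exact_mod_cast turan_fiber_card n r hr0 k
      have hqknn : (0:ℝ) ≤ ∑ v ∈ P k, z v ^ 2 :=
        Finset.sum_nonneg (fun v _ => sq_nonneg _)
      nlinarith [sq_nonneg (∑ v ∈ P k, z v)]
    calc ∑ k ∈ Finset.range r, ∑ v ∈ P k, ∑ w ∈ P ((v:ℕ) % r), (z v - z w)^2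
        ≤ ∑ k ∈ Finset.range r, 2 * C * ∑ v ∈ P k, z v ^ 2 :=
          Finset.sum_le_sum hfiber
      _ = 2 * C * q := by rw [← Finset.mul_sum, hqk]
  have hfinal : ∑ v : Fin n, ∑ w : Fin n, (if (turanGraph n r).Adj v w then (z v - z w)^2 else 0)
      ≥ 2 * n * q - 2 * C * q := by
    rw [Finset.sum_congr rfl (fun v _ => Finset.sum_congr rfl (fun w _ => hsplit v w))]
    have : ∑ v : Fin n, ∑ w : Fin n, ((z v - z w)^2 - (if (v:ℕ) % r = (w:ℕ) % r then (z v - z w)^2 else 0))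
        = (∑ v : Fin n, ∑ w : Fin n, (z v - z w)^2)
          - ∑ v : Fin n, ∑ w : Fin n, (if (v:ℕ) % r = (w:ℕ) % r then (z v - z w)^2 else 0) := by
      rw [← Finset.sum_sub_distrib]
      exact Finset.sum_congr rfl (fun v _ => by rw [← Finset.sum_sub_distrib])
    rw [this, h2nq]
    linarith
  refine le_trans
    (b := 1/2 * ∑ v : Fin n, ∑ w : Fin n, (if (turanGraph n r).Adj v w then (z v - z w)^2 else 0))
    (by linarith [hfinal]) (le_of_eq ?_)
  congr 1
  exact Finset.sum_congr rfl (fun v _ => Finset.sum_congr rfl (fun w _ => ite_irrel _ _ _ _))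

end Sorted
end Aux

/-- For `n > r ≥ 2`, every `K_{r+1}`-free graph `G` of order `n` has
algebraic connectivity `μ₂(G) ≤ n - ⌈n/r⌉`, and this bound is attained by the Turán
graph `T_r(n)`, which is `K_{r+1}`-free. -/
theorem mu2_le_of_cliqueFree (n r : ℕ) (hr : 2 ≤ r) (hn : r < n)
    (G : SimpleGraph (Fin n)) (hG : G.CliqueFree (r + 1)) :
    mu2 G ≤ (n : ℝ) - ((n + r - 1) / r : ℕ) ∧
    (turanGraph n r).CliqueFree (r + 1) ∧
    mu2 (turanGraph n r) = (n : ℝ) - ((n + r - 1) / r : ℕ) := by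
  have hr0 : 0 < r := by omega
  set C : ℕ := (n + r - 1) / r with hC
  have hC2 : 2 ≤ C := (Nat.le_div_iff_mul_le hr0).mpr (by omega)
  have hCn : C ≤ n := by
    have h2n : n * 2 ≤ n * r := Nat.mul_le_mul_left n hr
    have h3 : n + r - 1 ≤ n * r := by omega
    calc C ≤ (n * r) / r := Nat.div_le_div_right h3
      _ = n := Nat.mul_div_cancel n hr0
  have hTfree : (turanGraph n r).CliqueFree (r + 1) := turanGraph_cliqueFree hr0
  have hbound : ∀ H : SimpleGraph (Fin n), H.CliqueFree (r + 1) → mu2 H ≤ (n : ℝ) - C := by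
    intro H hH
    letI := Classical.decRel H.Adj
    obtain ⟨v, hv⟩ := exists_low_degree n r hr hn H hH
    exact mu2_upper n C hC2 hCn H v hv
  refine ⟨hbound G hG, hTfree, le_antisymm (hbound _ hTfree) ?_⟩
  refine le_mu2_of_count (turanGraph n r) _ ?_ ?_
  · rw [Fintype.card_fin]; omega
  · exact card_lt_le_one (laplacian_isHermitian _) _
      (fun z hz => turan_quad_lower n r hr hn z hz)
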